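/- The containment direction of the cycle ratio profile theorem: for every finite simple graph G with hom(C_4;G) ≠ 0, the point (hom(C_8;G)/hom(C_4;G)^2, ..., hom(C_{4ℓ};G)/hom(C_4;G)^ℓ) lies in Π_ℓ. Explicitly, there exist n and nonnegative reals x_1,...,x_n with Σ x_i = 1 such that hom(C_{4j};G)/hom(C_4;G)^j = Σ_i x_i^j for all 2 ≤ j ≤ ℓ. -/

import Mathlib

open SimpleGraph

/-- The number of graph homomorphisms from `H` to `G`. -/
noncomputable def homCount {α β : Type*} (H : SimpleGraph α) (G : SimpleGraph β) : ℕ :=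
  Nat.card (H →g G)

open Finset Matrix

private lemma pow_apply_eq {V R : Type*} [Fintype V] [DecidableEq V] [CommSemiring R]
    (A : Matrix V V R) : ∀ (m : ℕ) (u v : V),
    (A ^ m) u v = ∑ f : Fin (m + 1) → V,
      if f 0 = u ∧ f (Fin.last m) = v then ∏ i : Fin m, A (f i.castSucc) (f i.succ) else 0
  | 0, u, v => by
    rw [pow_zero, Matrix.one_apply, ← Equiv.sum_comp (Equiv.funUnique (Fin 1) V).symm]
    simp [ite_and, Finset.sum_ite_eq']
  | (m+1), u, v => by
    rw [pow_succ', Matrix.mul_apply]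
    simp_rw [pow_apply_eq A m, Finset.mul_sum]
    rw [← Equiv.sum_comp (Fin.consEquiv (fun _ : Fin (m+1+1) => V)), Fintype.sum_prod_type]
    simp only [Fin.consEquiv_apply, Fin.cons_zero, Fin.cons_succ, Fin.succ_last,
      Fin.prod_univ_succ, ← Fin.succ_castSucc]
    rw [Finset.sum_comm]
    conv_rhs => rw [Finset.sum_comm]
    refine Finset.sum_congr rfl fun g _ => ?_
    simp_rw [ite_and, mul_ite, mul_zero, Finset.sum_ite_eq, Finset.sum_ite_eq']
    simp [← Fin.succ_last]

private lemma snoc_succ {V : Type*} (m : ℕ) (g : Fin (m+1) → V) (i : Fin (m+1)) :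
    (Fin.snoc g (g 0) : Fin (m+2) → V) i.succ = g (i + 1) := by
  rcases eq_or_ne i (Fin.last m) with rfl | h
  · rw [Fin.succ_last, Fin.snoc_last]
    congr 1
    ext
    simp [Fin.val_add_one]
  · have : i.succ = Fin.castSucc (i + 1) := by
      ext
      rw [Fin.coe_castSucc, Fin.val_add_one, if_neg h, Fin.val_succ]
    rw [this, Fin.snoc_castSucc]

private lemma trace_pow_eq {V R : Type*} [Fintype V] [DecidableEq V] [CommSemiring R]
    (A : Matrix V V R) (m : ℕ) :
    (A ^ (m+1)).trace = ∑ g : Fin (m+1) → V, ∏ i : Fin (m+1), A (g i) (g (i+1)) := by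
  rw [Matrix.trace]
  simp_rw [Matrix.diag, pow_apply_eq A (m+1)]
  rw [Finset.sum_comm]
  simp_rw [ite_and, Finset.sum_ite_eq, Finset.mem_univ, if_true]
  rw [← Equiv.sum_comp (Fin.snocEquiv (fun _ : Fin (m+1+1) => V)), Fintype.sum_prod_type]
  simp only [Fin.snocEquiv_apply]
  rw [Finset.sum_comm]
  refine Finset.sum_congr rfl fun g _ => ?_
  have h0 : ∀ x : V, (Fin.snoc g x : Fin (m+1+1) → V) 0 = g 0 := fun x => by
    rw [show (0 : Fin (m+1+1)) = Fin.castSucc 0 from rfl, Fin.snoc_castSucc]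
  simp_rw [Fin.snoc_last, h0, Finset.sum_ite_eq', Finset.mem_univ, if_true]
  refine Finset.prod_congr rfl fun i _ => ?_
  rw [Fin.snoc_castSucc, snoc_succ]

private def homEquiv {V : Type*} (G : SimpleGraph V) (m : ℕ) :
    (cycleGraph (m+2) →g G) ≃ {f : Fin (m+2) → V // ∀ i, G.Adj (f i) (f (i+1))} where
  toFun φ := ⟨φ, fun i => φ.map_adj (by rw [cycleGraph_adj']; right; simp)⟩
  invFun p := ⟨p.1, by
    intro a b hab
    rw [cycleGraph_adj'] at hab
    rcases hab with h | h
    · have hab : a = b + 1 := by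
        have h1 : a - b = 1 := Fin.ext (by simpa using h)
        have := congrArg (· + b) h1
        simpa [sub_add_cancel, add_comm] using this
      exact hab ▸ (p.2 b).symm
    · have hab : b = a + 1 := by
        have h1 : b - a = 1 := Fin.ext (by simpa using h)
        have := congrArg (· + a) h1
        simpa [sub_add_cancel, add_comm] using this
      exact hab ▸ (p.2 a)⟩
  left_inv φ := rfl
  right_inv p := rfl

private lemma homCount_eq {V : Type*} [Fintype V] [DecidableEq V] (G : SimpleGraph V)
    [DecidableRel G.Adj] (m : ℕ) :
    (homCount (cycleGraph (m+2)) G : ℝ) = ((G.adjMatrix ℝ) ^ (m+2)).trace := by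
  rw [show m+2 = (m+1)+1 from rfl, trace_pow_eq]
  simp_rw [SimpleGraph.adjMatrix_apply, Finset.prod_boole]
  simp only [Finset.mem_univ, true_implies]
  rw [Finset.sum_boole]
  rw [homCount, Nat.card_congr (homEquiv G m), Nat.card_eq_fintype_card, Fintype.card_subtype]

private lemma trace_pow_spec {V : Type*} [Fintype V] [DecidableEq V] {A : Matrix V V ℝ}
    (hA : A.IsHermitian) (m : ℕ) :
    (A ^ m).trace = ∑ i, hA.eigenvalues i ^ m := by
  set U : Matrix V V ℝ := (hA.eigenvectorUnitary : Matrix V V ℝ) with hU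
  set D : Matrix V V ℝ := diagonal (RCLike.ofReal ∘ hA.eigenvalues) with hD
  have h1 : star U * U = 1 := (Matrix.mem_unitaryGroup_iff').mp hA.eigenvectorUnitary.2
  have h2 : U * star U = 1 := (Matrix.mem_unitaryGroup_iff).mp hA.eigenvectorUnitary.2
  have key : A ^ m = U * D ^ m * star U := by
    induction m with
    | zero => simpa using h2.symm
    | succ k ih =>
        have collapse : ∀ X : Matrix V V ℝ, star U * (U * X) = X := fun X => by
          rw [← Matrix.mul_assoc, h1, Matrix.one_mul]
        rw [pow_succ, ih, pow_succ, hA.spectral_theorem]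
        simp only [Unitary.conjStarAlgAut_apply, ← hU, ← hD, Matrix.mul_assoc]
        rw [collapse]
  rw [key, Matrix.trace_mul_cycle, h1, Matrix.one_mul, hD,
    Matrix.diagonal_pow, Matrix.trace_diagonal]
  simp

/-- Containment direction of the cycle ratio profile theorem: for every finite simple graph
`G` with `hom(C_4;G) ≠ 0`, there exist `n` and nonnegative reals `x_1,…,x_n` summing to `1`
such that `hom(C_{4j};G)/hom(C_4;G)^j = Σ_i x_i^j` for all `2 ≤ j ≤ ℓ`. -/
theorem cycle_ratio_point_mem_powerSumProfile {V : Type*} [Fintype V]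
    (G : SimpleGraph V) (h4 : homCount (cycleGraph 4) G ≠ 0) (ℓ : ℕ) (hℓ : 2 ≤ ℓ) :
    ∃ (n : ℕ) (x : Fin n → ℝ), (∀ i, 0 ≤ x i) ∧ (∑ i, x i) = 1 ∧
      ∀ j : ℕ, 2 ≤ j → j ≤ ℓ →
        (homCount (cycleGraph (4 * j)) G : ℝ) / (homCount (cycleGraph 4) G : ℝ) ^ j =
          ∑ i, x i ^ j := by
  classical
  set A := G.adjMatrix ℝ with hAdef
  have hA : A.IsHermitian := Matrix.IsHermitian.ext fun i j => by
    simp [hAdef, SimpleGraph.adjMatrix_apply, G.adj_comm]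
  set lam := hA.eigenvalues with hlam
  have htr : ∀ m : ℕ, (homCount (cycleGraph (m+2)) G : ℝ) = ∑ i, lam i ^ (m+2) :=
    fun m => (homCount_eq G m).trans (trace_pow_spec hA (m+2))
  have h4' : (homCount (cycleGraph 4) G : ℝ) = ∑ i, lam i ^ 4 := htr 2
  set S : ℝ := ∑ i, lam i ^ 4 with hS
  have hSpos : 0 < S := by
    have hne : (homCount (cycleGraph 4) G : ℝ) ≠ 0 := Nat.cast_ne_zero.mpr h4
    rw [h4'] at hne
    have hge : 0 ≤ S := Finset.sum_nonneg fun i _ => by positivity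
    exact lt_of_le_of_ne hge (Ne.symm hne)
  set e := Fintype.equivFin V with he
  refine ⟨Fintype.card V, fun i => lam (e.symm i) ^ 4 / S, fun i => ?_, ?_, ?_⟩
  · positivity
  · rw [← Finset.sum_div, Equiv.sum_comp e.symm (fun v => lam v ^ 4)]
    exact div_self hSpos.ne'
  · intro j hj2 hjl
    have h4j : (homCount (cycleGraph (4*j)) G : ℝ) = ∑ i, lam i ^ (4*j) := by
      obtain ⟨k, hk⟩ : ∃ k, 4*j = k+2 := ⟨4*j-2, by omega⟩
      rw [hk]
      exact htr k
    rw [h4j, h4']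
    simp_rw [div_pow, ← pow_mul]
    rw [← Finset.sum_div, Equiv.sum_comp e.symm (fun v => lam v ^ (4*j))]
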